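/- arXiv:1306.3729 — 4 statements merged into one kernel-verified Lean document; each statement's English description precedes it below -/
import Mathlib

section
/- For a symmetric tensor X of order p over R^d and any tensor Y of the same shape, the generalized inner product ⟨X, Y⟩ = Σ_{i1,...,ip} X_{i1...ip} Y_{i1...ip} equals the inner product of their collapsed vectorizations ⟨cvec(X), cvec(Y)⟩, where cvec groups index tuples by their count profile c and assigns to each group the value (1/√|K(c)|) Σ_{k∈K(c)} X_k, with K(c) the set of index tuples with count profile c. -/
/-- The count profile of an index tuple `k : Fin p → Fin d`:
`cnt k i` is the number of positions `j` with `k j = i`. -/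
def cnt {d p : ℕ} (k : Fin p → Fin d) : Fin d → ℕ :=
  fun i => (Finset.univ.filter (fun j => k j = i)).card

/-- `Kset c` is the set of index tuples whose count profile is `c`. -/
def Kset {d p : ℕ} (c : Fin d → ℕ) : Finset (Fin p → Fin d) :=
  Finset.univ.filter (fun k => cnt k = c)

/-- Collapsed vectorization: the component of `cvec X` indexed by count profile `c`
is `(1/√|K(c)|) ∑_{k ∈ K(c)} X k`. -/
noncomputable def cvec {d p : ℕ} (X : (Fin p → Fin d) → ℝ) (c : Fin d → ℕ) : ℝ :=
  (Real.sqrt ((Kset (d := d) (p := p) c).card))⁻¹ * ∑ k ∈ Kset c, X k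

lemma count_ofFn {d p : ℕ} (k : Fin p → Fin d) (i : Fin d) :
    (List.ofFn k).count i = cnt k i := by
  rw [List.ofFn_eq_map, cnt]
  rw [List.count_eq_countP, List.countP_map]
  have : (Finset.filter (fun j => k j = i) Finset.univ).card
      = ((List.finRange p).filter (fun j => decide (k j = i))).length := rfl
  rw [this, List.countP_eq_length_filter]
  congr 1

lemma exists_perm {d p : ℕ} {k k' : Fin p → Fin d} (h : cnt k = cnt k') :
    ∃ σ : Equiv.Perm (Fin p), k' = k ∘ σ := by
  have hperm : List.Perm (List.ofFn k) (List.ofFn k') :=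
    List.perm_iff_count.2 fun i => by rw [count_ofFn, count_ofFn, h]
  have h1 : List.Perm (List.ofFn (k ∘ Tuple.sort k)) (List.ofFn (k' ∘ Tuple.sort k')) :=
    ((Equiv.Perm.ofFn_comp_perm _ k).trans hperm).trans
      (Equiv.Perm.ofFn_comp_perm _ k').symm
  have hs1 : (List.ofFn (k ∘ Tuple.sort k)).Pairwise (· ≤ ·) := by
    rw [← List.sortedLE_iff_pairwise, List.sortedLE_ofFn_iff]; exact Tuple.monotone_sort k
  have hs2 : (List.ofFn (k' ∘ Tuple.sort k')).Pairwise (· ≤ ·) := by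
    rw [← List.sortedLE_iff_pairwise, List.sortedLE_ofFn_iff]; exact Tuple.monotone_sort k'
  have heq : k ∘ Tuple.sort k = k' ∘ Tuple.sort k' :=
    List.ofFn_injective (List.Perm.eq_of_pairwise' hs1 hs2 h1)
  refine ⟨(Tuple.sort k').symm.trans (Tuple.sort k), funext fun x => ?_⟩
  have := congrFun heq ((Tuple.sort k').symm x)
  simpa using this.symm

/-- For a symmetric tensor `X` of order `p` over `ℝ^d` and an arbitrary tensor `Y`,
the generalized inner product `⟨X, Y⟩ = ∑_k X_k Y_k` equals the inner product of the
collapsed vectorizations `⟨cvec X, cvec Y⟩` (summed over all realized count profiles). -/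
theorem symmetric_inner_eq_cvec_inner {d p : ℕ}
    (X Y : (Fin p → Fin d) → ℝ)
    (hX : ∀ (σ : Equiv.Perm (Fin p)) (k : Fin p → Fin d), X (k ∘ σ) = X k) :
    ∑ k : Fin p → Fin d, X k * Y k
      = ∑ c ∈ Finset.univ.image (cnt (d := d) (p := p)), cvec X c * cvec Y c := by
  classical
  rw [← Finset.sum_fiberwise_of_maps_to (g := cnt)
      (fun k _ => Finset.mem_image_of_mem cnt (Finset.mem_univ k)) (fun k => X k * Y k)]
  refine Finset.sum_congr rfl fun c hc => ?_
  obtain ⟨k₀, _, hk₀⟩ := Finset.mem_image.1 hc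
  have hK : Finset.univ.filter (fun k => cnt k = c) = Kset (d := d) (p := p) c := rfl
  have hmem : k₀ ∈ Kset (d := d) (p := p) c := Finset.mem_filter.2 ⟨Finset.mem_univ _, hk₀⟩
  have hconst : ∀ k ∈ Kset (d := d) (p := p) c, X k = X k₀ := by
    intro k hk
    have hc' : cnt k = cnt k₀ := by rw [(Finset.mem_filter.1 hk).2, hk₀]
    obtain ⟨σ, hσ⟩ := exists_perm hc'
    rw [hσ, hX]
  have hcard : (0:ℝ) < ((Kset (d := d) (p := p) c).card : ℝ) := by
    exact_mod_cast Finset.card_pos.2 ⟨k₀, hmem⟩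
  have hXsum : ∑ k ∈ Kset (d := d) (p := p) c, X k
      = ((Kset (d := d) (p := p) c).card : ℝ) * X k₀ := by
    rw [Finset.sum_congr rfl hconst]; simp [mul_comm]
  have hXYsum : ∑ k ∈ Kset (d := d) (p := p) c, X k * Y k
      = X k₀ * ∑ k ∈ Kset (d := d) (p := p) c, Y k := by
    rw [Finset.mul_sum]
    exact Finset.sum_congr rfl fun k hk => by rw [hconst k hk]
  rw [hK, hXYsum, cvec, cvec, hXsum]
  have hs : Real.sqrt ((Kset (d := d) (p := p) c).card)
      * Real.sqrt ((Kset (d := d) (p := p) c).card)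
      = ((Kset (d := d) (p := p) c).card : ℝ) := Real.mul_self_sqrt (le_of_lt hcard)
  have hsne : Real.sqrt ((Kset (d := d) (p := p) c).card) ≠ 0 := by
    positivity
  field_simp
  rw [Real.sq_sqrt (le_of_lt hcard)]
end

section
/- In the mixture of linear regressions model, y³ = ⟨M3, x^⊗3⟩ + 3E[ε²]⟨M1, x⟩ + E[ε³] + η3(x), where η3(x) = ⟨β_h^⊗3 − M3, x^⊗3⟩ + 3ε⟨β_h^⊗2, x^⊗2⟩ + 3(ε²⟨β_h, x⟩ − E[ε²]⟨M1, x⟩) + (ε³ − E[ε³]) has conditional mean zero given x. -/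
open MeasureTheory ProbabilityTheory

/-- In the mixture of linear regressions model, for a fixed covariate `x`,
`y³ = ⟨M₃, x^⊗3⟩ + 3E[ε²]⟨M₁, x⟩ + E[ε³] + η₃(x)` where
`η₃(x) = ⟨β_h^⊗3 − M₃, x^⊗3⟩ + 3ε⟨β_h^⊗2, x^⊗2⟩ + 3(ε²⟨β_h, x⟩ − E[ε²]⟨M₁, x⟩) + (ε³ − E[ε³])`
has mean zero, with `M_p = ∑_h π_h β_h^⊗p`. -/
theorem eta3_decomposition_and_mean_zero {Ω : Type*} [MeasurableSpace Ω] (μ : Measure Ω)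
    [IsProbabilityMeasure μ]
    {d k : ℕ} (π : Fin k → ℝ) (β : Fin k → Fin d → ℝ) (x : Fin d → ℝ)
    (H : Ω → Fin k) (ε : Ω → ℝ)
    (hH : Measurable H) (hε : Measurable ε)
    (hπ : ∀ h, 0 ≤ π h) (hπ1 : ∑ h, π h = 1)
    (hdist : ∀ h, μ (H ⁻¹' {h}) = ENNReal.ofReal (π h))
    (hind : IndepFun H ε μ)
    (hεint : Integrable ε μ) (hεmean : ∫ ω, ε ω ∂μ = 0)
    (hε2int : Integrable (fun ω => ε ω ^ 2) μ)
    (hε3int : Integrable (fun ω => ε ω ^ 3) μ)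
    (m2 m3 : ℝ) (hm2 : ∫ ω, ε ω ^ 2 ∂μ = m2) (hm3 : ∫ ω, ε ω ^ 3 ∂μ = m3)
    (y : Ω → ℝ) (hy : ∀ ω, y ω = (∑ i, β (H ω) i * x i) + ε ω)
    (M1 : Fin d → ℝ) (hM1 : M1 = ∑ h, π h • β h)
    (M3 : Fin d → Fin d → Fin d → ℝ)
    (hM3 : M3 = fun i j l => ∑ h, π h * (β h i * β h j * β h l))
    (η3 : Ω → ℝ)
    (hη3 : ∀ ω, η3 ω =
      ((∑ i, β (H ω) i * x i) ^ 3 - ∑ i, ∑ j, ∑ l, M3 i j l * x i * x j * x l)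
        + 3 * ε ω * (∑ i, β (H ω) i * x i) ^ 2
        + 3 * (ε ω ^ 2 * (∑ i, β (H ω) i * x i) - m2 * (∑ i, M1 i * x i))
        + (ε ω ^ 3 - m3)) :
    (∀ ω, y ω ^ 3 = (∑ i, ∑ j, ∑ l, M3 i j l * x i * x j * x l)
        + 3 * m2 * (∑ i, M1 i * x i) + m3 + η3 ω)
      ∧ ∫ ω, η3 ω ∂μ = 0 := by
  set c : Fin k → ℝ := fun h => ∑ i, β h i * x i with hc
  constructor
  · intro ω
    rw [hy ω, hη3 ω]
    ring
  -- representation of φ ∘ H as finite sum of indicators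
  have hrepr : ∀ φ : Fin k → ℝ, (fun ω => φ (H ω)) =
      fun ω => ∑ h : Fin k, (H ⁻¹' {h}).indicator (fun _ => φ h) ω := by
    intro φ; funext ω
    rw [Finset.sum_eq_single (H ω)]
    · simp [Set.indicator]
    · intro b _ hb
      simp only [Set.indicator, Set.mem_preimage, Set.mem_singleton_iff]
      rw [if_neg (fun h => hb h.symm)]
    · simp
  have hIntH : ∀ φ : Fin k → ℝ, Integrable (fun ω => φ (H ω)) μ := by
    intro φ; rw [hrepr φ]
    exact integrable_finset_sum _ fun h _ =>
      (integrable_const (φ h)).indicator (hH (measurableSet_singleton h))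
  have hIntegH : ∀ φ : Fin k → ℝ, ∫ ω, φ (H ω) ∂μ = ∑ h, π h * φ h := by
    intro φ
    rw [hrepr φ, integral_finset_sum _ (fun h _ =>
      (integrable_const (φ h)).indicator (hH (measurableSet_singleton h)))]
    refine Finset.sum_congr rfl fun h _ => ?_
    rw [integral_indicator_const _ (hH (measurableSet_singleton h)), measureReal_def, hdist h,
      ENNReal.toReal_ofReal (hπ h), smul_eq_mul]
  have hindep : ∀ (φ : Fin k → ℝ) (ψ : ℝ → ℝ), Measurable ψ →
      IndepFun (fun ω => φ (H ω)) (fun ω => ψ (ε ω)) μ :=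
    fun φ ψ hψ => hind.comp (measurable_of_countable φ) hψ
  -- cube expansion
  have cube : ∀ (a : Fin d → ℝ), (∑ i, a i) ^ 3 = ∑ i, ∑ j, ∑ l, a i * a j * a l := by
    intro a
    rw [show (∑ i, a i) ^ 3 = ((∑ i, a i) * (∑ i, a i)) * (∑ i, a i) by ring]
    simp only [Finset.sum_mul, Finset.mul_sum]
    exact Finset.sum_congr rfl fun i _ => Finset.sum_congr rfl fun j _ =>
      Finset.sum_congr rfl fun l _ => by ring
  -- T3 identity
  have hT3 : ∑ i, ∑ j, ∑ l, M3 i j l * x i * x j * x l = ∑ h, π h * (c h) ^ 3 := by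
    subst hM3
    have key : ∀ h, π h * (c h) ^ 3
        = ∑ i, ∑ j, ∑ l, π h * (β h i * β h j * β h l) * x i * x j * x l := by
      intro h
      rw [hc, cube]
      simp only [Finset.mul_sum]
      exact Finset.sum_congr rfl fun i _ => Finset.sum_congr rfl fun j _ =>
        Finset.sum_congr rfl fun l _ => by ring
    calc ∑ i, ∑ j, ∑ l,
          (fun i j l => ∑ h, π h * (β h i * β h j * β h l)) i j l * x i * x j * x l
        = ∑ i, ∑ j, ∑ l, ∑ h, π h * (β h i * β h j * β h l) * x i * x j * x l := by
          simp only [Finset.sum_mul]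
      _ = ∑ i, ∑ j, ∑ h, ∑ l, π h * (β h i * β h j * β h l) * x i * x j * x l := by
          refine Finset.sum_congr rfl fun i _ => Finset.sum_congr rfl fun j _ => ?_
          rw [Finset.sum_comm]
      _ = ∑ i, ∑ h, ∑ j, ∑ l, π h * (β h i * β h j * β h l) * x i * x j * x l := by
          refine Finset.sum_congr rfl fun i _ => ?_
          rw [Finset.sum_comm]
      _ = ∑ h, ∑ i, ∑ j, ∑ l, π h * (β h i * β h j * β h l) * x i * x j * x l := by
          rw [Finset.sum_comm]
      _ = ∑ h, π h * (c h) ^ 3 := Finset.sum_congr rfl fun h _ => (key h).symm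
  -- S1 identity
  have hS1 : ∑ i, M1 i * x i = ∑ h, π h * c h := by
    subst hM1
    simp only [Finset.sum_apply, Pi.smul_apply, smul_eq_mul, Finset.sum_mul, hc,
      Finset.mul_sum]
    rw [Finset.sum_comm]
    exact Finset.sum_congr rfl fun h _ => Finset.sum_congr rfl fun i _ => by ring
  -- the four pieces
  set T3 : ℝ := ∑ i, ∑ j, ∑ l, M3 i j l * x i * x j * x l with hT3def
  set S1 : ℝ := ∑ i, M1 i * x i with hS1def
  have hf2ind := hindep (fun h => (c h) ^ 2) id measurable_id
  have hf3ind := hindep c (fun t => t ^ 2) (measurable_id.pow_const 2)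
  have hf2mul : Integrable (fun ω => (c (H ω)) ^ 2 * ε ω) μ :=
    hf2ind.integrable_mul (hIntH (fun h => (c h) ^ 2)) hεint
  have hf3mul : Integrable (fun ω => c (H ω) * ε ω ^ 2) μ :=
    hf3ind.integrable_mul (hIntH c) hε2int
  have hf1 : Integrable (fun ω => (c (H ω)) ^ 3 - T3) μ :=
    (hIntH (fun h => (c h) ^ 3)).sub (integrable_const T3)
  have hf2 : Integrable (fun ω => 3 * ((c (H ω)) ^ 2 * ε ω)) μ := hf2mul.const_mul 3
  have hf3 : Integrable (fun ω => 3 * (c (H ω) * ε ω ^ 2 - m2 * S1)) μ :=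
    (hf3mul.sub (integrable_const (m2 * S1))).const_mul 3
  have hf4 : Integrable (fun ω => ε ω ^ 3 - m3) μ := hε3int.sub (integrable_const m3)
  have hint : ∫ ω, η3 ω ∂μ =
      (∫ ω, ((c (H ω)) ^ 3 - T3) ∂μ) + (∫ ω, 3 * ((c (H ω)) ^ 2 * ε ω) ∂μ)
      + (∫ ω, 3 * (c (H ω) * ε ω ^ 2 - m2 * S1) ∂μ) + (∫ ω, (ε ω ^ 3 - m3) ∂μ) := by
    have C := integral_add hf1 hf2
    have B := integral_add (hf1.add hf2) hf3
    have A := integral_add ((hf1.add hf2).add hf3) hf4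
    simp only [Pi.add_apply] at A B C
    rw [← C, ← B, ← A]
    refine integral_congr_ae (Filter.Eventually.of_forall fun ω => ?_)
    rw [hη3 ω]; simp only [hc]; ring
  rw [hint, integral_sub (hIntH (fun h => (c h) ^ 3)) (integrable_const T3), integral_const,
    integral_const_mul, integral_const_mul, integral_sub hf3mul (integrable_const (m2 * S1)),
    integral_const, integral_sub hε3int (integrable_const m3), integral_const]
  have e1 : ∫ ω, (c (H ω)) ^ 3 ∂μ = T3 := by rw [hIntegH (fun h => (c h) ^ 3)]; exact hT3.symm
  have e2 : ∫ ω, (c (H ω)) ^ 2 * ε ω ∂μ = 0 := by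
    have := hf2ind.integral_fun_mul_eq_mul_integral (hIntH (fun h => (c h) ^ 2)).aestronglyMeasurable hεint.aestronglyMeasurable
    simpa [hεmean] using this
  have e3 : ∫ ω, c (H ω) * ε ω ^ 2 ∂μ = m2 * S1 := by
    have h' : ∫ ω, c (H ω) * ε ω ^ 2 ∂μ = (∫ ω, c (H ω) ∂μ) * ∫ ω, ε ω ^ 2 ∂μ :=
      hf3ind.integral_fun_mul_eq_mul_integral (hIntH c).aestronglyMeasurable hε2int.aestronglyMeasurable
    rw [h', hIntegH c, hm2, hS1]
    ring
  simp [e1, e2, e3, hm3, measure_univ]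
end

section
/- Suppose M2 = Σ_h π_h β_h β_h^T and M3 = Σ_h π_h β_h^⊗3 with π_h > 0 and β_h ∈ R^d linearly independent, and W ∈ R^{d×k} whitens M2 (W^T M2 W = I). Then the whitened tensor T = M3(W, W, W) ∈ (R^k)^⊗3, defined by T_{abc} = Σ_{i,j,l} (M3)_{ijl} W_{ia} W_{jb} W_{lc}, admits the orthogonal decomposition T = Σ_{h=1}^k π_h^{-1/2} v_h^⊗3 where v_h = √(π_h) W^T β_h are orthonormal. -/
open Matrix

lemma sqrt_pair_aux (p x y : ℝ) (hp : 0 < p) :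
    Real.sqrt p * x * (Real.sqrt p * y) = p * (x * y) := by
  have h2 : Real.sqrt p * Real.sqrt p = p := Real.mul_self_sqrt hp.le
  rw [show Real.sqrt p * x * (Real.sqrt p * y)
      = (Real.sqrt p * Real.sqrt p) * (x * y) from by ring, h2]

lemma sqrt_cube_aux (p x y z : ℝ) (hp : 0 < p) :
    (Real.sqrt p)⁻¹ * (Real.sqrt p * x * (Real.sqrt p * y) * (Real.sqrt p * z))
      = p * (x * y * z) := by
  have h1 : Real.sqrt p ≠ 0 := ne_of_gt (Real.sqrt_pos.mpr hp)
  have h2 : Real.sqrt p * Real.sqrt p = p := Real.mul_self_sqrt hp.le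
  rw [show Real.sqrt p * x * (Real.sqrt p * y) * (Real.sqrt p * z)
      = Real.sqrt p * ((Real.sqrt p * Real.sqrt p) * (x * y * z)) from by ring, h2,
    ← mul_assoc, inv_mul_cancel₀ h1, one_mul]

lemma sum_reorder_aux {k d : ℕ} (F : Fin k → Fin d → Fin d → Fin d → ℝ) :
    (∑ i, ∑ j, ∑ l, ∑ h, F h i j l) = ∑ h, ∑ i, ∑ j, ∑ l, F h i j l := by
  trans (∑ i, ∑ j, ∑ h, ∑ l, F h i j l)
  · exact Finset.sum_congr rfl fun i _ => Finset.sum_congr rfl fun j _ => Finset.sum_comm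
  trans (∑ i, ∑ h, ∑ j, ∑ l, F h i j l)
  · exact Finset.sum_congr rfl fun i _ => Finset.sum_comm
  exact Finset.sum_comm

/-- If `M₂ = ∑_h π_h β_h β_h^T` and `M₃ = ∑_h π_h β_h^⊗3` with `π_h > 0` and the `β_h`
linearly independent, and `W` whitens `M₂` (`W^T M₂ W = 1`), then the whitened tensor
`T = M₃(W, W, W)` admits the orthogonal decomposition
`T = ∑_h π_h^{-1/2} v_h^⊗3` where `v_h = √(π_h) W^T β_h` are orthonormal. -/
theorem whitened_tensor_orthogonal_decomposition {d k : ℕ}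
    (π : Fin k → ℝ) (β : Fin k → Fin d → ℝ)
    (M2 : Matrix (Fin d) (Fin d) ℝ) (M3 : Fin d → Fin d → Fin d → ℝ)
    (W : Matrix (Fin d) (Fin k) ℝ)
    (hπ : ∀ h, 0 < π h)
    (hβ : LinearIndependent ℝ β)
    (hM2 : M2 = ∑ h, π h • Matrix.vecMulVec (β h) (β h))
    (hM3 : M3 = fun i j l => ∑ h, π h * (β h i * β h j * β h l))
    (hW : Wᵀ * M2 * W = 1)
    (v : Fin k → Fin k → ℝ)
    (hv : v = fun h => Real.sqrt (π h) • Wᵀ.mulVec (β h))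
    (T : Fin k → Fin k → Fin k → ℝ)
    (hT : T = fun a b c => ∑ i, ∑ j, ∑ l, M3 i j l * W i a * W j b * W l c) :
    (∀ a b c, T a b c = ∑ h, (Real.sqrt (π h))⁻¹ * (v h a * v h b * v h c))
      ∧ (∀ g h, v g ⬝ᵥ v h = if g = h then 1 else 0) := by
  set u : Fin k → Fin k → ℝ := fun h => Wᵀ.mulVec (β h) with hu
  -- key identity from whitening
  have key : ∀ a b : Fin k, (∑ h, π h * (u h a * u h b)) = if a = b then 1 else 0 := by
    intro a b
    have := congrFun (congrFun hW a) b
    rw [Matrix.one_apply] at this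
    rw [← this]
    simp only [hM2, Matrix.mul_apply, Matrix.sum_apply, Matrix.smul_apply,
      Matrix.vecMulVec_apply, smul_eq_mul, Matrix.transpose_apply, hu,
      Matrix.mulVec, dotProduct, Finset.mul_sum, Finset.sum_mul]
    rw [Finset.sum_comm]
    refine Finset.sum_congr rfl fun h _ => ?_
    rw [Finset.sum_comm]
    refine Finset.sum_congr rfl fun i _ => Finset.sum_congr rfl fun j _ => ?_
    ring
  -- part 2 via matrix inverse symmetry
  have hUU : ∀ g h : Fin k, (∑ a, v g a * v h a) = if g = h then 1 else 0 := by
    set U : Matrix (Fin k) (Fin k) ℝ := fun a h => v h a with hU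
    have h1 : U * Uᵀ = 1 := by
      ext a b
      rw [Matrix.mul_apply, Matrix.one_apply, ← key a b]
      refine Finset.sum_congr rfl fun h _ => ?_
      simp only [hU, Matrix.transpose_apply, hv, Pi.smul_apply, smul_eq_mul]
      exact sqrt_pair_aux _ _ _ (hπ h)
    have h2 : Uᵀ * U = 1 := mul_eq_one_comm.mp h1
    intro g h
    have := congrFun (congrFun h2 g) h
    rw [Matrix.one_apply] at this
    rw [← this, Matrix.mul_apply]
    simp [hU, Matrix.transpose_apply, mul_comm]
    exact Finset.sum_congr rfl fun x _ => mul_comm _ _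
  refine ⟨fun a b c => ?_, fun g h => by rw [dotProduct]; exact hUU g h⟩
  -- part 1
  rw [hT, hM3]
  simp only [Finset.sum_mul]
  rw [sum_reorder_aux]
  refine Finset.sum_congr rfl fun h _ => ?_
  have hrhs : (Real.sqrt (π h))⁻¹ * (v h a * v h b * v h c)
      = π h * (u h a * (u h b * u h c)) := by
    simp only [hv, Pi.smul_apply, smul_eq_mul, hu]
    rw [sqrt_cube_aux _ _ _ _ (hπ h)]
    ring
  rw [hrhs]
  symm
  simp only [hu, Matrix.mulVec, dotProduct, Matrix.transpose_apply]
  rw [Finset.sum_mul_sum, Finset.sum_mul_sum]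
  simp only [Finset.mul_sum]
  refine Finset.sum_congr rfl fun i _ => ?_
  refine Finset.sum_congr rfl fun j _ => ?_
  refine Finset.sum_congr rfl fun l _ => ?_
  ring
end

section
/- Let A be a rank-k d×d positive semidefinite matrix and Â a PSD matrix with ε̃ := ||Â − A||_op / σ_k(A) < 1/3. Let Ŵ whiten Â and define W = Ŵ U D^{−1/2} U^T where Ŵ^T A Ŵ = U D U^T is an eigendecomposition. Then ||I − D||_op ≤ ε̃/(1 − ε̃). -/
open Matrix
open scoped Matrix.Norms.L2Operator InnerProductSpace

/-- The ℓ²→ℓ² operator norm (spectral norm) of a real rectangular matrix. -/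
noncomputable def opNorm {m n : ℕ} (A : Matrix (Fin m) (Fin n) ℝ) : ℝ :=
  ‖LinearMap.toContinuousLinearMap
      (Matrix.toLin (EuclideanSpace.basisFun (Fin n) ℝ).toBasis
        (EuclideanSpace.basisFun (Fin m) ℝ).toBasis A)‖

/-- Eigenvalues of a real matrix (junk value `0` if not symmetric). -/
noncomputable def eigVals {d : ℕ} (A : Matrix (Fin d) (Fin d) ℝ) : Fin d → ℝ :=
  if h : A.IsHermitian then h.eigenvalues else 0

/-- `sval A j` is the `(j+1)`-th largest eigenvalue of the symmetric matrix `A`;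
for a positive semidefinite matrix this is the `(j+1)`-th largest singular value. -/
noncomputable def sval {d : ℕ} (A : Matrix (Fin d) (Fin d) ℝ) (j : Fin d) : ℝ :=
  (eigVals A ∘ Tuple.sort (eigVals A)) j.rev

lemma sval_def {d : ℕ} (A : Matrix (Fin d) (Fin d) ℝ) (j : Fin d) :
    sval A j = (eigVals A ∘ Tuple.sort (eigVals A)) j.rev := rfl

variable {d : ℕ} {M : Matrix (Fin d) (Fin d) ℝ}

lemma key_repr (hM : M.IsHermitian) (s : Finset (Fin d)) (x : EuclideanSpace ℝ (Fin d))
    (hx : x ∈ Submodule.span ℝ (hM.eigenvectorBasis '' s)) :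
    ⟪x, Matrix.toEuclideanLin M x⟫_ℝ = ∑ j, hM.eigenvalues j * (hM.eigenvectorBasis.repr x j)^2 ∧
    ‖x‖^2 = ∑ j, (hM.eigenvectorBasis.repr x j)^2 ∧
    (∀ j ∉ s, hM.eigenvectorBasis.repr x j = 0) := by
  set b := hM.eigenvectorBasis with hb
  have hzero : ∀ j ∉ s, b.repr x j = 0 := by
    intro j hj
    have hle : Submodule.span ℝ (b '' s) ≤ LinearMap.ker
        ((EuclideanSpace.proj j).toLinearMap.comp (b.repr.toLinearEquiv : _ →ₗ[ℝ] _)) := by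
      rw [Submodule.span_le]
      rintro _ ⟨i, hi, rfl⟩
      simp only [SetLike.mem_coe, LinearMap.mem_ker, LinearMap.comp_apply]
      have : b.repr (b i) j = 0 := by
        rw [b.repr_self]
        simp [EuclideanSpace.single_apply]
        intro h; exact absurd (h ▸ hi) hj
      simpa using this
    simpa using hle hx
  have heig : ∀ j, Matrix.toEuclideanLin M (b j) = hM.eigenvalues j • b j := by
    intro j
    apply (WithLp.equiv 2 _).injective
    simpa [Matrix.piLp_ofLp_toEuclideanLin] using hM.mulVec_eigenvectorBasis j
  have hrepr : ∀ j, b.repr (Matrix.toEuclideanLin M x) j = hM.eigenvalues j * b.repr x j := by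
    intro j
    rw [b.repr_apply_apply, b.repr_apply_apply]
    calc ⟪b j, Matrix.toEuclideanLin M x⟫_ℝ
        = ⟪Matrix.toEuclideanLin M (b j), x⟫_ℝ :=
          ((Matrix.isHermitian_iff_isSymmetric.1 hM) (b j) x).symm
      _ = hM.eigenvalues j * ⟪b j, x⟫_ℝ := by rw [heig j, real_inner_smul_left]
  refine ⟨?_, ?_, hzero⟩
  · rw [← b.repr.inner_map_map x (Matrix.toEuclideanLin M x), PiLp.inner_apply]
    exact Finset.sum_congr rfl fun j _ => by simp [hrepr j, pow_two]; ring
  · rw [← real_inner_self_eq_norm_sq, ← b.repr.inner_map_map x x, PiLp.inner_apply]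
    exact Finset.sum_congr rfl fun j _ => by simp [pow_two]

lemma rayleigh_lower (hM : M.IsHermitian) (s : Finset (Fin d)) (c : ℝ)
    (hc : ∀ j ∈ s, c ≤ hM.eigenvalues j) (x : EuclideanSpace ℝ (Fin d))
    (hx : x ∈ Submodule.span ℝ (hM.eigenvectorBasis '' s)) :
    c * ‖x‖^2 ≤ ⟪x, Matrix.toEuclideanLin M x⟫_ℝ := by
  obtain ⟨h1, h2, h3⟩ := key_repr hM s x hx
  rw [h1, h2, Finset.mul_sum]
  refine Finset.sum_le_sum fun j _ => ?_
  by_cases hj : j ∈ s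
  · exact mul_le_mul_of_nonneg_right (hc j hj) (sq_nonneg _)
  · simp [h3 j hj]

lemma rayleigh_upper (hM : M.IsHermitian) (s : Finset (Fin d)) (c : ℝ)
    (hc : ∀ j ∈ s, hM.eigenvalues j ≤ c) (x : EuclideanSpace ℝ (Fin d))
    (hx : x ∈ Submodule.span ℝ (hM.eigenvectorBasis '' s)) :
    ⟪x, Matrix.toEuclideanLin M x⟫_ℝ ≤ c * ‖x‖^2 := by
  obtain ⟨h1, h2, h3⟩ := key_repr hM s x hx
  rw [h1, h2, Finset.mul_sum]
  refine Finset.sum_le_sum fun j _ => ?_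
  by_cases hj : j ∈ s
  · exact mul_le_mul_of_nonneg_right (hc j hj) (sq_nonneg _)
  · simp [h3 j hj]

lemma finrank_span_onb (b : OrthonormalBasis (Fin d) ℝ (EuclideanSpace ℝ (Fin d)))
    (s : Finset (Fin d)) :
    Module.finrank ℝ (Submodule.span ℝ (b '' s)) = s.card := by
  have li : LinearIndependent ℝ (fun i : (s : Set (Fin d)) => b i) :=
    b.orthonormal.linearIndependent.comp Subtype.val Subtype.val_injective
  have := finrank_span_eq_card li
  rw [← Set.image_eq_range] at this
  rw [this]; simp

lemma exists_mem_inf (S T : Submodule ℝ (EuclideanSpace ℝ (Fin d)))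
    (h : d < Module.finrank ℝ S + Module.finrank ℝ T) :
    ∃ x : EuclideanSpace ℝ (Fin d), x ∈ S ⊓ T ∧ x ≠ 0 := by
  have hsum := Submodule.finrank_sup_add_finrank_inf_eq S T
  have hle : Module.finrank ℝ ↥(S ⊔ T) ≤ d := by
    simpa [finrank_euclideanSpace] using Submodule.finrank_le (S ⊔ T)
  have hpos : 0 < Module.finrank ℝ ↥(S ⊓ T) := by omega
  have : Nontrivial ↥(S ⊓ T) := Module.nontrivial_of_finrank_pos hpos
  obtain ⟨x, hx⟩ := exists_ne (0 : ↥(S ⊓ T))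
  exact ⟨x.1, x.2, by simpa [Submodule.coe_eq_zero] using hx⟩

lemma quad_sub_bound (E : Matrix (Fin d) (Fin d) ℝ) (x : EuclideanSpace ℝ (Fin d)) :
    |⟪x, Matrix.toEuclideanLin E x⟫_ℝ| ≤ ‖E‖ * ‖x‖^2 := by
  calc |⟪x, Matrix.toEuclideanLin E x⟫_ℝ| ≤ ‖x‖ * ‖Matrix.toEuclideanLin E x‖ :=
        abs_real_inner_le_norm _ _
    _ ≤ ‖x‖ * (‖E‖ * ‖x‖) := by
        refine mul_le_mul_of_nonneg_left ?_ (norm_nonneg x)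
        exact (LinearMap.toContinuousLinearMap (Matrix.toEuclideanLin E)).le_opNorm x
    _ = ‖E‖ * ‖x‖^2 := by ring

lemma weyl_lower (q : Fin d) (M N : Matrix (Fin d) (Fin d) ℝ)
    (hM : M.IsHermitian) (hN : N.IsHermitian) :
    (eigVals M ∘ Tuple.sort (eigVals M)) q - ‖N - M‖ ≤ (eigVals N ∘ Tuple.sort (eigVals N)) q := by
  have heM : eigVals M = hM.eigenvalues := dif_pos hM
  have heN : eigVals N = hN.eigenvalues := dif_pos hN
  set τ := Tuple.sort (eigVals M)
  set τ' := Tuple.sort (eigVals N)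
  set sM : Finset (Fin d) := (Finset.Ici q).image τ with hsM
  set sN : Finset (Fin d) := (Finset.Iic q).image τ' with hsN
  set S := Submodule.span ℝ (hM.eigenvectorBasis '' sM)
  set T := Submodule.span ℝ (hN.eigenvectorBasis '' sN)
  have hcard : d < Module.finrank ℝ S + Module.finrank ℝ T := by
    rw [finrank_span_onb, finrank_span_onb, hsM, hsN,
      Finset.card_image_of_injective _ τ.injective,
      Finset.card_image_of_injective _ τ'.injective, Fin.card_Ici, Fin.card_Iic]
    have := q.2; omega
  obtain ⟨x, ⟨hxS, hxT⟩, hx0⟩ := exists_mem_inf S T hcard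
  have hxn : (0:ℝ) < ‖x‖^2 := by
    have : (0:ℝ) < ‖x‖ := norm_pos_iff.mpr hx0
    positivity
  have hlow : (eigVals M ∘ τ) q * ‖x‖^2 ≤ ⟪x, Matrix.toEuclideanLin M x⟫_ℝ := by
    refine rayleigh_lower hM sM _ ?_ x hxS
    intro j hj
    obtain ⟨i, hi, rfl⟩ := Finset.mem_image.mp hj
    rw [← heM]
    exact Tuple.monotone_sort (eigVals M) (Finset.mem_Ici.mp hi)
  have hup : ⟪x, Matrix.toEuclideanLin N x⟫_ℝ ≤ (eigVals N ∘ τ') q * ‖x‖^2 := by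
    refine rayleigh_upper hN sN _ ?_ x hxT
    intro j hj
    obtain ⟨i, hi, rfl⟩ := Finset.mem_image.mp hj
    rw [← heN]
    exact Tuple.monotone_sort (eigVals N) (Finset.mem_Iic.mp hi)
  have hsub : ⟪x, Matrix.toEuclideanLin M x⟫_ℝ - ‖N - M‖ * ‖x‖^2 ≤
      ⟪x, Matrix.toEuclideanLin N x⟫_ℝ := by
    have h1 : ⟪x, Matrix.toEuclideanLin N x⟫_ℝ - ⟪x, Matrix.toEuclideanLin M x⟫_ℝ
        = ⟪x, Matrix.toEuclideanLin (N - M) x⟫_ℝ := by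
      rw [map_sub]; simp [inner_sub_right]
    have h2 := (abs_le.mp (quad_sub_bound (N - M) x)).1
    linarith
  nlinarith


lemma sorted_pos {d k : ℕ} (hk : 0 < k) (hkd : k ≤ d) (A : Matrix (Fin d) (Fin d) ℝ)
    (hA : A.PosSemidef) (hrank : A.rank = k) (q : Fin d) (hq : (q : ℕ) = d - k) :
    0 < (eigVals A ∘ Tuple.sort (eigVals A)) q := by
  have hH := hA.isHermitian
  have heA : eigVals A = hH.eigenvalues := dif_pos hH
  set τ := Tuple.sort (eigVals A) with hτ
  by_contra hle
  push_neg at hle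
  have hnn : ∀ i, 0 ≤ hH.eigenvalues i := fun i => hA.eigenvalues_nonneg i
  have hzero : ∀ i : Fin d, i ≤ q → hH.eigenvalues (τ i) = 0 := by
    intro i hi
    have h1 : eigVals A (τ i) ≤ eigVals A (τ q) := Tuple.monotone_sort (eigVals A) hi
    rw [heA] at h1
    have h2 : eigVals A (τ q) ≤ 0 := hle
    rw [heA] at h2
    exact le_antisymm (h1.trans h2) (hnn _)
  have hcount : Fintype.card {i // hH.eigenvalues i ≠ 0} = k := by
    rw [← hH.rank_eq_card_non_zero_eigs, hrank]
  have hsub : (Finset.univ.filter fun i => hH.eigenvalues i ≠ 0) ⊆ (Finset.Ioi q).image τ := by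
    intro j hj
    rw [Finset.mem_filter] at hj
    refine Finset.mem_image.mpr ⟨τ.symm j, ?_, by simp⟩
    rw [Finset.mem_Ioi]
    by_contra hnlt
    push_neg at hnlt
    exact hj.2 (by simpa using hzero (τ.symm j) hnlt)
  have hcard := Finset.card_le_card hsub
  rw [Finset.card_image_of_injective _ τ.injective, Fin.card_Ioi] at hcard
  rw [Fintype.card_subtype] at hcount
  omega

lemma opNorm_eq_l2 {m n : ℕ} (A : Matrix (Fin m) (Fin n) ℝ) : opNorm A = ‖A‖ := by
  rw [Matrix.l2_opNorm_def, Matrix.toEuclideanLin_eq_toLin_orthonormal]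
  rfl

lemma real_conjTranspose {m n : ℕ} (A : Matrix (Fin m) (Fin n) ℝ) : Aᴴ = Aᵀ := by
  ext i j; simp [Matrix.conjTranspose_apply]

lemma l2_opNorm_transpose {m n : ℕ} (A : Matrix (Fin m) (Fin n) ℝ) : ‖Aᵀ‖ = ‖A‖ := by
  rw [← real_conjTranspose, Matrix.l2_opNorm_conjTranspose]

lemma l2_norm_one {k : ℕ} (hk : 0 < k) : ‖(1 : Matrix (Fin k) (Fin k) ℝ)‖ = 1 := by
  haveI : Nonempty (Fin k) := ⟨⟨0, hk⟩⟩
  rw [Matrix.cstar_norm_def, _root_.map_one]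
  exact ContinuousLinearMap.norm_id

lemma l2_norm_orth {k : ℕ} (hk : 0 < k) (U : Matrix (Fin k) (Fin k) ℝ) (hU : Uᵀ * U = 1) :
    ‖U‖ = 1 := by
  have h := Matrix.l2_opNorm_conjTranspose_mul_self U
  rw [real_conjTranspose, hU, l2_norm_one hk] at h
  nlinarith [norm_nonneg U]


/-- Let `A` be a rank-`k` `d×d` PSD matrix and `Â` a PSD matrix with
`ε̃ := ‖Â − A‖_op/σ_k(A) < 1/3`. Let `Ŵ` (canonically) whiten `Â` and let
`Ŵ^T A Ŵ = U D U^T` be an eigendecomposition (`U` orthogonal, `D` diagonal).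
Then `‖I − D‖_op ≤ ε̃/(1 − ε̃)`. -/
theorem whitening_eigendecomposition_perturbation {d k : ℕ} (hk : 0 < k) (hkd : k ≤ d)
    (A Ahat : Matrix (Fin d) (Fin d) ℝ) (What : Matrix (Fin d) (Fin k) ℝ)
    (U : Matrix (Fin k) (Fin k) ℝ) (dvec : Fin k → ℝ)
    (hA : A.PosSemidef) (hrank : A.rank = k) (hAhat : Ahat.PosSemidef)
    (σk εt : ℝ)
    (hσk : σk = sval A ⟨k - 1, by omega⟩)
    (hεt : εt = opNorm (Ahat - A) / σk)
    (hεlt : εt < 1 / 3)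
    (hwhiten : Whatᵀ * Ahat * What = 1)
    (hWnorm : opNorm What = (Real.sqrt (sval Ahat ⟨k - 1, by omega⟩))⁻¹)
    (hU : Uᵀ * U = 1)
    (hdecomp : Whatᵀ * A * What = U * Matrix.diagonal dvec * Uᵀ) :
    opNorm (1 - Matrix.diagonal dvec) ≤ εt / (1 - εt) := by
  -- sorted-index bookkeeping
  have hd : 0 < d := lt_of_lt_of_le hk hkd
  set q : Fin d := (⟨k - 1, by omega⟩ : Fin d).rev with hqdef
  have hrev : (q : ℕ) = d - k := by
    simp [hqdef, Fin.val_rev]; omega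
  have hσk' : σk = (eigVals A ∘ Tuple.sort (eigVals A)) q := by
    rw [hσk, sval_def]
  have hWnorm' : opNorm What
      = (Real.sqrt ((eigVals Ahat ∘ Tuple.sort (eigVals Ahat)) q))⁻¹ := by
    rw [hWnorm, sval_def]
  obtain ⟨σh, hσh'⟩ : ∃ t : ℝ, (eigVals Ahat ∘ Tuple.sort (eigVals Ahat)) q = t := ⟨_, rfl⟩
  rw [hσh'] at hWnorm'
  -- positivity of σk
  have hσpos : 0 < σk := by
    rw [hσk']
    exact sorted_pos hk hkd A hA hrank q hrev
  -- Weyl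
  have hweyl : σk - ‖Ahat - A‖ ≤ σh := by
    rw [hσk', ← hσh']
    exact weyl_lower q A Ahat hA.isHermitian hAhat.isHermitian
  set E : ℝ := ‖Ahat - A‖ with hE
  have hEnn : 0 ≤ E := norm_nonneg _
  have hEεt : E = εt * σk := by
    rw [hεt, opNorm_eq_l2]
    field_simp
    exact hE
  have hεtnn : 0 ≤ εt := by
    rw [hεt, opNorm_eq_l2]
    positivity
  have hεt3 : εt < 1/3 := hεlt
  have hσhpos : 0 < σh := by nlinarith
  -- ‖What‖² = σh⁻¹
  have hWn : ‖What‖ = (Real.sqrt σh)⁻¹ := by rw [← opNorm_eq_l2, hWnorm']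
  have hWsq : ‖What‖ * ‖What‖ = σh⁻¹ := by
    rw [hWn, ← mul_inv]
    rw [Real.mul_self_sqrt hσhpos.le]
  -- matrix identity
  set D := Matrix.diagonal dvec with hD
  have hkey : Whatᵀ * (Ahat - A) * What = 1 - U * D * Uᵀ := by
    rw [Matrix.mul_sub, Matrix.sub_mul, hwhiten, hdecomp]
  have h1D : (1 : Matrix (Fin k) (Fin k) ℝ) - D = Uᵀ * (Whatᵀ * (Ahat - A) * What) * U := by
    rw [hkey, Matrix.mul_sub, Matrix.sub_mul, Matrix.mul_one, hU]
    symm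
    congr 1
    calc Uᵀ * (U * D * Uᵀ) * U = (Uᵀ * U) * D * (Uᵀ * U) := by
          simp only [Matrix.mul_assoc]
      _ = D := by rw [hU]; simp
  -- norm chain
  have hUn : ‖U‖ = 1 := l2_norm_orth hk U hU
  have hUtn : ‖Uᵀ‖ = 1 := by rw [l2_opNorm_transpose, hUn]
  have hWtn : ‖Whatᵀ‖ = ‖What‖ := l2_opNorm_transpose What
  have hbound : ‖(1 : Matrix (Fin k) (Fin k) ℝ) - D‖ ≤ σh⁻¹ * E := by
    rw [h1D]
    calc ‖Uᵀ * (Whatᵀ * (Ahat - A) * What) * U‖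
        ≤ ‖Uᵀ * (Whatᵀ * (Ahat - A) * What)‖ * ‖U‖ := Matrix.l2_opNorm_mul _ _
      _ ≤ ‖Uᵀ‖ * ‖Whatᵀ * (Ahat - A) * What‖ * ‖U‖ := by
          have := Matrix.l2_opNorm_mul Uᵀ (Whatᵀ * (Ahat - A) * What)
          nlinarith [norm_nonneg U]
      _ = ‖Whatᵀ * (Ahat - A) * What‖ := by rw [hUn, hUtn]; ring
      _ ≤ ‖Whatᵀ * (Ahat - A)‖ * ‖What‖ := Matrix.l2_opNorm_mul _ _
      _ ≤ ‖Whatᵀ‖ * ‖Ahat - A‖ * ‖What‖ := by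
          have := Matrix.l2_opNorm_mul Whatᵀ (Ahat - A)
          nlinarith [norm_nonneg What]
      _ = σh⁻¹ * E := by
          rw [hWtn, ← hE, show ‖What‖ * E * ‖What‖ = ‖What‖ * ‖What‖ * E from by ring, hWsq]
  -- final numeric bound
  rw [opNorm_eq_l2]
  refine hbound.trans ?_
  have h1ε : 0 < 1 - εt := by linarith
  have hσh2 : (1 - εt) * σk ≤ σh := by nlinarith
  calc σh⁻¹ * E = E / σh := by ring
    _ ≤ E / ((1 - εt) * σk) := by
        apply div_le_div_of_nonneg_left hEnn (by positivity) hσh2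
    _ = εt / (1 - εt) := by
        rw [hEεt]; field_simp
end
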